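/- arXiv:2404.00688 — 3 statements merged into one kernel-verified Lean document; each statement's English description precedes it below -/
import Mathlib

section
/- Let P be a d×d real orthogonal projection matrix of rank p with 1 ≤ p ≤ d−1, P⊥ = I − P, q = d − p, and let λ₁, λ₂ > 0. Let D ∈ ℝ^{k×d} be a matrix whose k rows each have Euclidean norm at most 1, and set B = DᵀD + λ₁·P⊥ + λ₂·P. Then log( det(B) / (λ₁^q · λ₂^p) ) ≤ p·log(1 + k/(p·λ₂)) + q·log(1 + k/(q·λ₁)). -/
open Matrix

lemma psd_det_nonneg {n : Type*} [Fintype n] [DecidableEq n] {A : Matrix n n ℝ}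
    (hA : A.PosSemidef) : 0 ≤ A.det := by
  rw [hA.1.det_eq_prod_eigenvalues]
  exact Finset.prod_nonneg fun i _ => by simpa using hA.eigenvalues_nonneg i

lemma one_le_det_one_add {n : Type*} [Fintype n] [DecidableEq n] {W : Matrix n n ℝ}
    (hW : W.PosSemidef) : 1 ≤ (1 + W).det := by
  have hH : W.IsHermitian := hW.1
  set U : Matrix n n ℝ := (hH.eigenvectorUnitary : Matrix n n ℝ) with hU
  have hUU : star U * U = 1 := Matrix.mem_unitaryGroup_iff'.mp hH.eigenvectorUnitary.2
  have hUU' : U * star U = 1 := Matrix.mem_unitaryGroup_iff.mp hH.eigenvectorUnitary.2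
  have hspec : W = U * diagonal hH.eigenvalues * star U := by
    simpa [RCLike.ofReal_real_eq_id] using hH.spectral_theorem
  have key : 1 + W = U * diagonal (fun i => 1 + hH.eigenvalues i) * star U := by
    have : (diagonal (fun i => 1 + hH.eigenvalues i) : Matrix n n ℝ)
        = 1 + diagonal hH.eigenvalues := by
      rw [← diagonal_one, ← diagonal_add]
    rw [this, Matrix.mul_add, Matrix.add_mul, Matrix.mul_one, hUU', ← hspec]
  rw [key, det_mul, det_mul, mul_comm, ← mul_assoc, ← det_mul, hUU, det_one, one_mul,
    det_diagonal]
  have h := Finset.prod_le_prod (f := fun _ : n => (1:ℝ))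
    (g := fun i => 1 + hH.eigenvalues i) (s := Finset.univ)
    (fun _ _ => zero_le_one)
    (fun i _ => le_add_of_nonneg_right (hW.eigenvalues_nonneg i))
  simpa using h

open scoped MatrixOrder in
lemma det_le_det_add_psd {n : Type*} [Fintype n] [DecidableEq n] {X Y : Matrix n n ℝ}
    (hX : X.PosSemidef) (hY : Y.PosSemidef) : X.det ≤ (X + Y).det := by
  by_cases hdet : X.det = 0
  · rw [hdet]; exact psd_det_nonneg (hX.add hY)
  · set S := CFC.sqrt X with hSdef
    have hS : S.PosSemidef := (CFC.sqrt_nonneg X).posSemidef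
    have hSS : S * S = X := CFC.sqrt_mul_sqrt_self X hX.nonneg
    have hSdetne : S.det ≠ 0 := fun h => hdet (by rw [← hSS, det_mul, h, mul_zero])
    have hSunit : IsUnit S.det := isUnit_iff_ne_zero.2 hSdetne
    have hSinv : S * S⁻¹ = 1 := mul_nonsing_inv S hSunit
    have hSinv' : S⁻¹ * S = 1 := nonsing_inv_mul S hSunit
    have hW : (S⁻¹ * Y * S⁻¹).PosSemidef := by
      have := hY.mul_mul_conjTranspose_same S⁻¹
      rwa [hS.1.inv.eq] at this
    have hmid : S * (S⁻¹ * Y * S⁻¹) * S = Y := by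
      calc S * (S⁻¹ * Y * S⁻¹) * S = S * S⁻¹ * Y * (S⁻¹ * S) := by
            simp only [Matrix.mul_assoc]
        _ = Y := by rw [hSinv, hSinv', Matrix.one_mul, Matrix.mul_one]
    have key : X + Y = S * (1 + S⁻¹ * Y * S⁻¹) * S := by
      rw [Matrix.mul_add, Matrix.add_mul, Matrix.mul_one, hSS, hmid]
    have hXdet : X.det = S.det * S.det := by rw [← hSS, det_mul]
    rw [key, det_mul, det_mul]
    have : S.det * (1 + S⁻¹ * Y * S⁻¹).det * S.det
        = X.det * (1 + S⁻¹ * Y * S⁻¹).det := by rw [hXdet]; ring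
    rw [this]
    exact le_mul_of_one_le_right (psd_det_nonneg hX) (one_le_det_one_add hW)

lemma fischer_det_le {m n : Type*} [Fintype m] [Fintype n] [DecidableEq m] [DecidableEq n]
    {A : Matrix m m ℝ} {B : Matrix m n ℝ} {Dm : Matrix n n ℝ}
    (h : (fromBlocks A B Bᴴ Dm).PosDef) :
    (fromBlocks A B Bᴴ Dm).det ≤ A.det * Dm.det := by
  have hDm : Dm.PosDef := by
    refine Matrix.PosDef.of_dotProduct_mulVec_pos ?_ ?_
    · have h1 : (fromBlocks A B Bᴴ Dm)ᴴ = fromBlocks A B Bᴴ Dm := h.1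
      rw [fromBlocks_conjTranspose] at h1
      have := congrArg Matrix.toBlocks₂₂ h1
      simpa [Matrix.toBlocks_fromBlocks₂₂, Matrix.IsSymm] using this
    · intro x hx
      have hx' : (Sum.elim (0 : m → ℝ) x) ≠ 0 := by
        intro hcon; apply hx; funext i; exact congrFun hcon (Sum.inr i)
      have h2 := h.dotProduct_mulVec_pos hx'
      simpa [fromBlocks_mulVec, sumElim_dotProduct_sumElim] using h2
  haveI : Invertible Dm := Matrix.invertibleOfIsUnitDet Dm hDm.det_pos.ne'.isUnit
  rw [Matrix.det_fromBlocks₂₂]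
  have hinv : (⅟Dm : Matrix n n ℝ) = Dm⁻¹ := invOf_eq_nonsing_inv Dm
  rw [hinv]
  have hX : (A - B * Dm⁻¹ * Bᴴ).PosSemidef :=
    (Matrix.PosDef.fromBlocks₂₂ A B hDm).mp h.posSemidef
  have hY : (B * Dm⁻¹ * Bᴴ).PosSemidef :=
    hDm.inv.posSemidef.mul_mul_conjTranspose_same B
  have hsum : (A - B * Dm⁻¹ * Bᴴ) + B * Dm⁻¹ * Bᴴ = A := sub_add_cancel A _
  have hle : (A - B * Dm⁻¹ * Bᴴ).det ≤ A.det := by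
    have := det_le_det_add_psd hX hY
    rwa [hsum] at this
  calc Dm.det * (A - B * Dm⁻¹ * Bᴴ).det ≤ Dm.det * A.det :=
        mul_le_mul_of_nonneg_left hle hDm.det_pos.le
    _ = A.det * Dm.det := mul_comm _ _

lemma posdef_submatrix_equiv {m n : Type*} [Fintype m] [Fintype n] {M : Matrix n n ℝ}
    (hM : M.PosDef) (e : m ≃ n) : (M.submatrix e e).PosDef := by
  refine Matrix.PosDef.of_dotProduct_mulVec_pos ?_ ?_
  · have : (M.submatrix e e)ᴴ = Mᴴ.submatrix e e := conjTranspose_submatrix M e e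
    show (M.submatrix e e)ᴴ = _
    rw [this, hM.1.eq]
  · intro x hx
    have hx' : x ∘ e.symm ≠ 0 := by
      intro hcon; apply hx; funext i
      simpa using congrFun hcon (e i)
    have hpos := hM.dotProduct_mulVec_pos hx'
    have heq : star x ⬝ᵥ (M.submatrix e e *ᵥ x)
        = star (x ∘ e.symm) ⬝ᵥ (M *ᵥ (x ∘ e.symm)) := by
      rw [Matrix.submatrix_mulVec_equiv]
      simp only [dotProduct, Function.comp]
      exact Fintype.sum_equiv e _ _ fun i => by simp
    rw [heq]; exact hpos

lemma psd_det_le_trace_pow {n : Type*} [Fintype n] [DecidableEq n] [Nonempty n]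
    {A : Matrix n n ℝ} (hA : A.PosSemidef) :
    A.det ≤ (A.trace / Fintype.card n) ^ (Fintype.card n) := by
  have hH := hA.1
  set c : ℕ := Fintype.card n with hc
  have hc0 : 0 < c := Fintype.card_pos
  have hcR : (0:ℝ) < c := by exact_mod_cast hc0
  have hdet : A.det = ∏ i, hH.eigenvalues i := by
    simpa [RCLike.ofReal_real_eq_id] using hH.det_eq_prod_eigenvalues
  have htr : A.trace = ∑ i, hH.eigenvalues i := by
    conv_lhs => rw [hH.spectral_theorem, Unitary.conjStarAlgAut_apply]
    rw [Matrix.trace_mul_cycle,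
      Matrix.mem_unitaryGroup_iff'.mp hH.eigenvectorUnitary.2, Matrix.one_mul]
    simp [RCLike.ofReal_real_eq_id, Matrix.trace_diagonal]
  have hnn : ∀ i, 0 ≤ hH.eigenvalues i := fun i => hA.eigenvalues_nonneg i
  have hwsum : ∑ _i : n, (1:ℝ)/c = 1 := by
    rw [Finset.sum_const, Finset.card_univ, ← hc, nsmul_eq_mul]
    field_simp
  have amgm := Real.geom_mean_le_arith_mean_weighted Finset.univ (fun _ => (1:ℝ)/c)
      hH.eigenvalues (fun _ _ => by positivity) hwsum (fun i _ => hnn i)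
  have hprod : ∏ i, hH.eigenvalues i = (∏ i, hH.eigenvalues i ^ ((1:ℝ)/c)) ^ c := by
    rw [← Finset.prod_pow]
    refine Finset.prod_congr rfl fun i _ => ?_
    rw [← Real.rpow_natCast (hH.eigenvalues i ^ ((1:ℝ)/c)) c, ← Real.rpow_mul (hnn i)]
    rw [one_div, inv_mul_cancel₀ hcR.ne', Real.rpow_one]
  have hrhs : ∑ i, (1:ℝ)/c * hH.eigenvalues i = A.trace / c := by
    rw [htr, Finset.sum_div]
    exact Finset.sum_congr rfl fun i _ => by ring
  calc A.det = (∏ i, hH.eigenvalues i ^ ((1:ℝ)/c)) ^ c := by rw [hdet, hprod]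
    _ ≤ (A.trace / c) ^ c := by
        apply pow_le_pow_left₀ (Finset.prod_nonneg fun i _ => Real.rpow_nonneg (hnn i) _)
        rw [← hrhs]; exact amgm
    _ = (A.trace / Fintype.card n) ^ (Fintype.card n) := by rw [hc]

lemma block_det_bound {d : ℕ} {M : Matrix (Fin d) (Fin d) ℝ} (hM : M.PosDef)
    (s : Finset (Fin d)) (hs : 0 < s.card) (hsc : 0 < sᶜ.card) :
    M.det ≤ ((∑ i ∈ s, M i i) / (s.card : ℝ)) ^ s.card
      * ((∑ i ∈ sᶜ, M i i) / ((sᶜ : Finset (Fin d)).card : ℝ)) ^ sᶜ.card := by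
  classical
  let e : {x // x ∈ s} ⊕ {x // ¬ x ∈ s} ≃ Fin d := Equiv.sumCompl (· ∈ s)
  set M' := M.submatrix e e with hM'def
  have hM' : M'.PosDef := posdef_submatrix_equiv hM e
  have hdet : M.det = M'.det := (Matrix.det_submatrix_equiv_self e M).symm
  have hentry : ∀ a b, M' a b = M' b a := by
    intro a b
    conv_lhs => rw [← hM'.1.eq]
    simp [Matrix.conjTranspose_apply]
  set A := M'.toBlocks₁₁ with hA
  set B := M'.toBlocks₁₂ with hB
  set Dm := M'.toBlocks₂₂ with hDm
  have hCB : M'.toBlocks₂₁ = Bᴴ := by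
    ext i j
    simp only [Matrix.toBlocks₂₁, Matrix.toBlocks₁₂, hB, Matrix.conjTranspose_apply,
      Matrix.of_apply, star_trivial]
    exact hentry _ _
  have hblocks : M' = fromBlocks A B Bᴴ Dm := by
    rw [← hCB, hA, hB, hDm]
    exact (fromBlocks_toBlocks M').symm
  have hPD : (fromBlocks A B Bᴴ Dm).PosDef := hblocks ▸ hM'
  have hfischer : M'.det ≤ A.det * Dm.det := by
    rw [hblocks]; exact fischer_det_le hPD
  haveI hne1 : Nonempty {x // x ∈ s} := by
    obtain ⟨x, hx⟩ := Finset.card_pos.mp hs; exact ⟨⟨x, hx⟩⟩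
  haveI hne2 : Nonempty {x // ¬ x ∈ s} := by
    obtain ⟨x, hx⟩ := Finset.card_pos.mp hsc
    exact ⟨⟨x, Finset.mem_compl.mp hx⟩⟩
  have hcard1 : Fintype.card {x // x ∈ s} = s.card := Fintype.card_coe s
  have hcard2 : Fintype.card {x // ¬ x ∈ s} = sᶜ.card := by
    rw [← Fintype.card_coe (sᶜ)]
    exact Fintype.card_congr (Equiv.subtypeEquivRight (fun x => (Finset.mem_compl).symm))
  have htrA : A.trace = ∑ i ∈ s, M i i := by
    rw [Matrix.trace, ← Finset.sum_coe_sort s (fun i => M i i)]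
    refine Finset.sum_congr rfl fun i _ => ?_
    simp [Matrix.diag, hA, Matrix.toBlocks₁₁, hM'def, e]
  have htrD : Dm.trace = ∑ i ∈ sᶜ, M i i := by
    rw [Matrix.trace]
    rw [← Finset.sum_coe_sort (sᶜ) (fun i => M i i)]
    refine Fintype.sum_equiv
      (Equiv.subtypeEquivRight (fun x => (Finset.mem_compl (s := s)).symm)) _ _ fun i => ?_
    simp [Matrix.diag, hDm, Matrix.toBlocks₂₂, hM'def, e]
  have hApsd : A.PosSemidef := hM'.posSemidef.submatrix Sum.inl
  have hDpsd : Dm.PosSemidef := hM'.posSemidef.submatrix Sum.inr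
  have h1 := psd_det_le_trace_pow hApsd
  have h2 := psd_det_le_trace_pow hDpsd
  rw [hcard1, htrA] at h1
  rw [hcard2, htrD] at h2
  calc M.det = M'.det := hdet
    _ ≤ A.det * Dm.det := hfischer
    _ ≤ _ :=
        mul_le_mul h1 h2 (psd_det_nonneg hDpsd) (le_trans (psd_det_nonneg hApsd) h1)

/-- Lemma 2: determinant-ratio bound
log( det(B) / (λ₁^q λ₂^p) ) ≤ p·log(1 + k/(p·λ₂)) + q·log(1 + k/(q·λ₁)). -/
theorem log_det_ratio_bound (d p k : ℕ) (hp1 : 1 ≤ p) (hpd : p ≤ d - 1)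
    (P : Matrix (Fin d) (Fin d) ℝ)
    (hsymm : Pᵀ = P) (hidem : P * P = P) (hrank : P.rank = p)
    (l1 l2 : ℝ) (hl1 : 0 < l1) (hl2 : 0 < l2)
    (D : Matrix (Fin k) (Fin d) ℝ)
    (hrow : ∀ i : Fin k, Real.sqrt (D i ⬝ᵥ D i) ≤ 1) :
    Real.log ((Dᵀ * D + l1 • ((1 : Matrix (Fin d) (Fin d) ℝ) - P) + l2 • P).det
        / (l1 ^ (d - p) * l2 ^ p))
      ≤ (p : ℝ) * Real.log (1 + (k : ℝ) / ((p : ℝ) * l2))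
        + ((d - p : ℕ) : ℝ) * Real.log (1 + (k : ℝ) / (((d - p : ℕ) : ℝ) * l1)) := by
  classical
  have hpd' : p < d := by omega
  set q : ℕ := d - p with hqdef
  have hq : 0 < q := by omega
  have hp : 0 < p := hp1
  -- Hermitian
  have hP : P.IsHermitian := by
    show Pᴴ = P
    rw [conjTranspose_eq_transpose_of_trivial, hsymm]
  set U : Matrix (Fin d) (Fin d) ℝ := (hP.eigenvectorUnitary : Matrix (Fin d) (Fin d) ℝ)
    with hUdef
  have hUU : star U * U = 1 := Matrix.mem_unitaryGroup_iff'.mp hP.eigenvectorUnitary.2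
  have hUU' : U * star U = 1 := Matrix.mem_unitaryGroup_iff.mp hP.eigenvectorUnitary.2
  set μ : Fin d → ℝ := hP.eigenvalues with hμdef
  have hdiagP : star U * P * U = diagonal μ := by
    simpa [RCLike.ofReal_real_eq_id] using hP.conjStarAlgAut_star_eigenvectorUnitary
  -- eigenvalues are 0 or 1
  have h01 : ∀ i, μ i = 0 ∨ μ i = 1 := by
    intro i
    have hsq : diagonal μ * diagonal μ = diagonal μ := by
      calc diagonal μ * diagonal μ = (star U * P * U) * (star U * P * U) := by rw [hdiagP]
        _ = star U * P * (U * star U) * P * U := by simp only [Matrix.mul_assoc]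
        _ = star U * (P * P) * U := by
            rw [hUU']; simp only [Matrix.mul_one, Matrix.mul_assoc]
        _ = diagonal μ := by rw [hidem, hdiagP]
    rw [diagonal_mul_diagonal] at hsq
    have hii : μ i * μ i = μ i := by
      have := congrFun (congrFun hsq i) i
      simpa [Matrix.diagonal_apply_eq] using this
    have : μ i * (μ i - 1) = 0 := by ring_nf; linear_combination hii
    rcases mul_eq_zero.mp this with h | h
    · exact Or.inl h
    · exact Or.inr (by linarith)
  -- the set of nonzero eigenvalues
  set s : Finset (Fin d) := Finset.univ.filter (fun i => μ i ≠ 0) with hsdef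
  have hscard : s.card = p := by
    have h1 : P.rank = Fintype.card {i // μ i ≠ 0} := hP.rank_eq_card_non_zero_eigs
    rw [hrank] at h1
    rw [hsdef, ← Fintype.card_subtype]
    exact h1.symm
  have hsccard : sᶜ.card = q := by
    rw [Finset.card_compl, hscard, Fintype.card_fin]
  -- the weight function
  set w : Fin d → ℝ := fun i => if μ i ≠ 0 then l2 else l1 with hwdef
  have hwpos : ∀ i, 0 < w i := by
    intro i
    simp only [hwdef]
    split_ifs
    exacts [hl2, hl1]
  -- conjugated matrix
  set B : Matrix (Fin d) (Fin d) ℝ :=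
    Dᵀ * D + l1 • ((1 : Matrix (Fin d) (Fin d) ℝ) - P) + l2 • P with hBdef
  set E : Matrix (Fin k) (Fin d) ℝ := D * U with hEdef
  set G : Matrix (Fin d) (Fin d) ℝ := Eᵀ * E with hGdef
  set M : Matrix (Fin d) (Fin d) ℝ := G + diagonal w with hMdef
  have hconj : star U * B * U = M := by
    have hstar : star U = Uᵀ := by
      rw [Matrix.star_eq_conjTranspose, conjTranspose_eq_transpose_of_trivial]
    have h1 : star U * (Dᵀ * D) * U = G := by
      rw [hGdef, hEdef, Matrix.transpose_mul, hstar]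
      simp only [Matrix.mul_assoc]
    have h2 : star U * (l1 • ((1 : Matrix (Fin d) (Fin d) ℝ) - P)) * U
        = l1 • ((1 : Matrix (Fin d) (Fin d) ℝ) - diagonal μ) := by
      rw [Matrix.mul_smul, Matrix.smul_mul]
      congr 1
      rw [Matrix.mul_sub, Matrix.mul_one, Matrix.sub_mul, hUU, hdiagP]
    have h3 : star U * (l2 • P) * U = l2 • diagonal μ := by
      rw [Matrix.mul_smul, Matrix.smul_mul, hdiagP]
    have hdw : l1 • ((1 : Matrix (Fin d) (Fin d) ℝ) - diagonal μ) + l2 • diagonal μ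
        = diagonal w := by
      ext i j
      by_cases hij : i = j
      · subst hij
        rcases h01 i with h | h <;>
          simp [Matrix.one_apply, Matrix.diagonal_apply_eq, hwdef, h]
      · simp [Matrix.one_apply_ne hij, Matrix.diagonal_apply_ne _ hij]
    rw [hBdef, hMdef, Matrix.mul_add, Matrix.mul_add, Matrix.add_mul, Matrix.add_mul,
      h1, h2, h3, add_assoc, hdw]
  have hGpsd : G.PosSemidef := by
    have := Matrix.posSemidef_conjTranspose_mul_self E
    rwa [conjTranspose_eq_transpose_of_trivial] at this
  have hMpd : M.PosDef :=
    Matrix.PosDef.posSemidef_add hGpsd (Matrix.posDef_diagonal_iff.mpr hwpos)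
  have hdetBM : B.det = M.det := by
    have h4 : (star U).det * U.det = 1 := by rw [← det_mul, hUU, det_one]
    calc B.det = B.det * ((star U).det * U.det) := by rw [h4, mul_one]
      _ = (star U).det * B.det * U.det := by ring
      _ = M.det := by rw [← hconj, det_mul, det_mul]
  -- trace bound
  have hGdiag : ∀ i, 0 ≤ G i i := by
    intro i
    have : G i i = ∑ j, E j i * E j i := by
      simp [hGdef, Matrix.mul_apply, Matrix.transpose_apply]
    rw [this]
    exact Finset.sum_nonneg fun j _ => mul_self_nonneg _
  have hGtrace : G.trace ≤ (k : ℝ) := by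
    have h1 : G.trace = (Dᵀ * D).trace := by
      rw [hGdef, hEdef, Matrix.transpose_mul]
      have hstar : Uᵀ = star U := by
        rw [Matrix.star_eq_conjTranspose, conjTranspose_eq_transpose_of_trivial]
      calc (Uᵀ * Dᵀ * (D * U)).trace = (Uᵀ * (Dᵀ * D) * U).trace := by
            simp only [Matrix.mul_assoc]
        _ = (U * Uᵀ * (Dᵀ * D)).trace := by
            rw [Matrix.trace_mul_cycle]
        _ = (Dᵀ * D).trace := by rw [hstar, hUU', Matrix.one_mul]
    have h2 : (Dᵀ * D).trace = ∑ r, D r ⬝ᵥ D r := by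
      rw [Matrix.trace]
      simp only [Matrix.diag, Matrix.mul_apply, Matrix.transpose_apply, dotProduct]
      exact Finset.sum_comm
    have h3 : ∀ r, D r ⬝ᵥ D r ≤ 1 := by
      intro r
      have h0 : 0 ≤ D r ⬝ᵥ D r := Finset.sum_nonneg fun j _ => mul_self_nonneg _
      nlinarith [Real.sq_sqrt h0, hrow r, Real.sqrt_nonneg (D r ⬝ᵥ D r)]
    calc G.trace = ∑ r, D r ⬝ᵥ D r := by rw [h1, h2]
      _ ≤ ∑ _r : Fin k, (1:ℝ) := Finset.sum_le_sum fun r _ => h3 r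
      _ = (k : ℝ) := by simp
  -- partial diag sums
  have hMdiag : ∀ i, M i i = G i i + w i := fun i => by
    simp [hMdef, Matrix.add_apply, Matrix.diagonal_apply_eq]
  have hsumG : ∀ t : Finset (Fin d), ∑ i ∈ t, G i i ≤ (k : ℝ) := by
    intro t
    have h5 : ∑ i ∈ t, G i i ≤ ∑ i ∈ Finset.univ, G i i :=
      Finset.sum_le_sum_of_subset_of_nonneg (Finset.subset_univ t) fun i _ _ => hGdiag i
    have h6 : ∑ i ∈ Finset.univ, G i i = G.trace := rfl
    rw [h6] at h5
    exact le_trans h5 hGtrace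
  have hMdiag_nonneg : ∀ i, 0 ≤ M i i := fun i => by
    rw [hMdiag i]; exact add_nonneg (hGdiag i) (hwpos i).le
  have hsum_s : ∑ i ∈ s, M i i ≤ (k : ℝ) + p * l2 := by
    have hws : ∀ i ∈ s, w i = l2 := fun i hi => by
      simp [hwdef, (Finset.mem_filter.mp hi).2]
    have e1 : ∑ i ∈ s, M i i = (∑ i ∈ s, G i i) + ∑ i ∈ s, w i := by
      rw [← Finset.sum_add_distrib]
      exact Finset.sum_congr rfl fun i _ => hMdiag i
    have e2 : ∑ i ∈ s, w i = p * l2 := by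
      rw [Finset.sum_congr rfl hws, Finset.sum_const, hscard, nsmul_eq_mul]
    rw [e1, e2]
    linarith [hsumG s]
  have hsum_sc : ∑ i ∈ sᶜ, M i i ≤ (k : ℝ) + q * l1 := by
    have hws : ∀ i ∈ sᶜ, w i = l1 := by
      intro i hi
      have hμ0 : μ i = 0 := by
        by_contra hne
        exact (Finset.mem_compl.mp hi) (Finset.mem_filter.mpr ⟨Finset.mem_univ i, hne⟩)
      simp [hwdef, hμ0]
    have e1 : ∑ i ∈ sᶜ, M i i = (∑ i ∈ sᶜ, G i i) + ∑ i ∈ sᶜ, w i := by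
      rw [← Finset.sum_add_distrib]
      exact Finset.sum_congr rfl fun i _ => hMdiag i
    have e2 : ∑ i ∈ sᶜ, w i = q * l1 := by
      rw [Finset.sum_congr rfl hws, Finset.sum_const, hsccard, nsmul_eq_mul]
    rw [e1, e2]
    linarith [hsumG sᶜ]
  -- apply block bound
  have hblock := block_det_bound hMpd s (by rw [hscard]; exact hp) (by rw [hsccard]; exact hq)
  rw [hscard, hsccard] at hblock
  have hpR : (0:ℝ) < p := by exact_mod_cast hp
  have hqR : (0:ℝ) < q := by exact_mod_cast hq
  have hb1 : (∑ i ∈ s, M i i) / (p:ℝ) ≤ l2 + (k:ℝ)/p := by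
    rw [div_le_iff₀ hpR]
    calc ∑ i ∈ s, M i i ≤ (k : ℝ) + p * l2 := hsum_s
      _ = (l2 + (k:ℝ)/p) * p := by field_simp; ring
  have hb2 : (∑ i ∈ sᶜ, M i i) / (q:ℝ) ≤ l1 + (k:ℝ)/q := by
    rw [div_le_iff₀ hqR]
    calc ∑ i ∈ sᶜ, M i i ≤ (k : ℝ) + q * l1 := hsum_sc
      _ = (l1 + (k:ℝ)/q) * q := by field_simp; ring
  have hd1 : 0 ≤ (∑ i ∈ s, M i i) / (p:ℝ) :=
    div_nonneg (Finset.sum_nonneg fun i _ => hMdiag_nonneg i) hpR.le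
  have hd2 : 0 ≤ (∑ i ∈ sᶜ, M i i) / (q:ℝ) :=
    div_nonneg (Finset.sum_nonneg fun i _ => hMdiag_nonneg i) hqR.le
  have hMdet_le : M.det ≤ (l2 + (k:ℝ)/p)^p * (l1 + (k:ℝ)/q)^q := by
    refine le_trans hblock (mul_le_mul (pow_le_pow_left₀ hd1 hb1 p)
      (pow_le_pow_left₀ hd2 hb2 q) (pow_nonneg hd2 q) (pow_nonneg ?_ p))
    exact le_trans hd1 hb1
  -- final log arithmetic
  have hBpos : 0 < B.det := by rw [hdetBM]; exact hMpd.det_pos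
  set R1 : ℝ := 1 + (k:ℝ)/((p:ℝ)*l2) with hR1def
  set R2 : ℝ := 1 + (k:ℝ)/((q:ℝ)*l1) with hR2def
  have hR1 : 0 < R1 := by positivity
  have hR2 : 0 < R2 := by positivity
  have hden : (0:ℝ) < l1^q * l2^p := by positivity
  have hkey : B.det / (l1^q * l2^p) ≤ R1^p * R2^q := by
    rw [div_le_iff₀ hden]
    have e3 : R1^p * R2^q * (l1^q * l2^p) = (R1*l2)^p * (R2*l1)^q := by
      rw [mul_pow, mul_pow]; ring
    have e1 : R1 * l2 = l2 + (k:ℝ)/p := by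
      rw [hR1def]; field_simp
    have e2 : R2 * l1 = l1 + (k:ℝ)/q := by
      rw [hR2def]; field_simp
    rw [e3, e1, e2, hdetBM]
    exact hMdet_le
  have hlog := Real.log_le_log (by positivity) hkey
  rw [Real.log_mul (pow_ne_zero _ hR1.ne') (pow_ne_zero _ hR2.ne'),
    Real.log_pow, Real.log_pow] at hlog
  exact hlog
end

section
/- Let P be a d×d real orthogonal projection matrix, P⊥ = I − P, λ₁, λ₂ > 0, D ∈ ℝ^{k×d}, θ*, θ̄ ∈ ℝ^d, ε ∈ ℝ^k, y = Dθ* + ε, B = DᵀD + λ₁·P⊥ + λ₂·P, and θ̂ = B⁻¹(Dᵀy + λ₁·P⊥θ̄). Then ‖θ̂ − θ*‖_B ≤ ‖Dᵀε‖_{B⁻¹} + λ₁·‖P⊥(θ̄ − θ*)‖_{B⁻¹} + λ₂·‖Pθ*‖_{B⁻¹}, where ‖x‖_A = √(xᵀAx) denotes the weighted norm for a positive definite matrix A. -/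
open Matrix

section Aux

variable {d k : ℕ}

private lemma sqdot_aux (A : Matrix (Fin k) (Fin d) ℝ) (x : Fin d → ℝ) :
    x ⬝ᵥ (Aᵀ * A) *ᵥ x = (A *ᵥ x) ⬝ᵥ (A *ᵥ x) := by
  rw [← mulVec_mulVec, dotProduct_mulVec, vecMul_transpose]

private lemma dot_self_nonneg_aux (v : Fin d → ℝ) : 0 ≤ v ⬝ᵥ v :=
  Finset.sum_nonneg fun _ _ => mul_self_nonneg _

private lemma dot_self_pos_aux {v : Fin d → ℝ} (hv : v ≠ 0) : 0 < v ⬝ᵥ v := by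
  obtain ⟨i, hi⟩ := Function.ne_iff.mp hv
  exact Finset.sum_pos' (fun j _ => mul_self_nonneg _)
    ⟨i, Finset.mem_univ i, mul_self_pos.mpr hi⟩

open scoped MatrixOrder in
noncomputable def Matrix.PosSemidef.sqrt {M : Matrix (Fin d) (Fin d) ℝ} (_hM : M.PosSemidef) :
    Matrix (Fin d) (Fin d) ℝ := CFC.sqrt M

open scoped MatrixOrder in
lemma Matrix.PosSemidef.sqrt_mul_self {M : Matrix (Fin d) (Fin d) ℝ} (hM : M.PosSemidef) :
    hM.sqrt * hM.sqrt = M := CFC.sqrt_mul_sqrt_self M hM.nonneg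

open scoped MatrixOrder in
lemma Matrix.PosSemidef.posSemidef_sqrt {M : Matrix (Fin d) (Fin d) ℝ} (hM : M.PosSemidef) :
    hM.sqrt.PosSemidef := (CFC.sqrt_nonneg M).posSemidef

/-- The PSD-weighted seminorm equals a Euclidean norm via the matrix square root. -/
private lemma psd_sqrt_norm {M : Matrix (Fin d) (Fin d) ℝ} (hM : M.PosSemidef)
    (u : Fin d → ℝ) :
    Real.sqrt (u ⬝ᵥ M *ᵥ u) = ‖(WithLp.equiv 2 (Fin d → ℝ)).symm (hM.sqrt *ᵥ u)‖ := by
  have hS : hM.sqrt * hM.sqrt = M := hM.sqrt_mul_self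
  have hT : (hM.sqrt)ᵀ = hM.sqrt := by
    have := hM.posSemidef_sqrt.1
    rw [← conjTranspose_eq_transpose_of_trivial]; exact this
  rw [EuclideanSpace.norm_eq]
  congr 1
  calc u ⬝ᵥ M *ᵥ u = u ⬝ᵥ ((hM.sqrt)ᵀ * hM.sqrt) *ᵥ u := by rw [hT, hS]
    _ = (hM.sqrt *ᵥ u) ⬝ᵥ (hM.sqrt *ᵥ u) := sqdot_aux _ _
    _ = ∑ i, ‖(hM.sqrt *ᵥ u) i‖ ^ 2 := by
        simp [dotProduct, Real.norm_eq_abs, sq_abs, sq]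

private lemma psd_triangle {M : Matrix (Fin d) (Fin d) ℝ} (hM : M.PosSemidef)
    (u v : Fin d → ℝ) :
    Real.sqrt ((u + v) ⬝ᵥ M *ᵥ (u + v))
      ≤ Real.sqrt (u ⬝ᵥ M *ᵥ u) + Real.sqrt (v ⬝ᵥ M *ᵥ v) := by
  rw [psd_sqrt_norm hM, psd_sqrt_norm hM, psd_sqrt_norm hM]
  have : (WithLp.equiv 2 (Fin d → ℝ)).symm (hM.sqrt *ᵥ (u + v))
      = (WithLp.equiv 2 (Fin d → ℝ)).symm (hM.sqrt *ᵥ u)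
        + (WithLp.equiv 2 (Fin d → ℝ)).symm (hM.sqrt *ᵥ v) := by
    rw [mulVec_add]; rfl
  rw [this]
  exact norm_add_le _ _

private lemma psd_smul {M : Matrix (Fin d) (Fin d) ℝ} (c : ℝ) (u : Fin d → ℝ) :
    Real.sqrt ((c • u) ⬝ᵥ M *ᵥ (c • u)) = |c| * Real.sqrt (u ⬝ᵥ M *ᵥ u) := by
  rw [mulVec_smul, smul_dotProduct, dotProduct_smul, smul_eq_mul, smul_eq_mul, ← mul_assoc,
    ← sq, Real.sqrt_mul (sq_nonneg c), Real.sqrt_sq_eq_abs]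

private lemma psd_neg {M : Matrix (Fin d) (Fin d) ℝ} (u : Fin d → ℝ) :
    Real.sqrt ((-u) ⬝ᵥ M *ᵥ (-u)) = Real.sqrt (u ⬝ᵥ M *ᵥ u) := by
  rw [mulVec_neg, neg_dotProduct, dotProduct_neg, neg_neg]

end Aux

/-- Triangle-inequality decomposition of the confidence-set bound:
‖θ̂ − θ*‖_B ≤ ‖Dᵀε‖_{B⁻¹} + λ₁‖P⊥(θ̄ − θ*)‖_{B⁻¹} + λ₂‖Pθ*‖_{B⁻¹}. -/
theorem confidence_triangle_decomposition (d k : ℕ)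
    (P : Matrix (Fin d) (Fin d) ℝ) (hsymm : Pᵀ = P) (hidem : P * P = P)
    (l1 l2 : ℝ) (hl1 : 0 < l1) (hl2 : 0 < l2)
    (D : Matrix (Fin k) (Fin d) ℝ) (θstar θbar : Fin d → ℝ) (ε : Fin k → ℝ)
    (y : Fin k → ℝ) (hy : y = D *ᵥ θstar + ε)
    (B : Matrix (Fin d) (Fin d) ℝ)
    (hB : B = Dᵀ * D + l1 • ((1 : Matrix (Fin d) (Fin d) ℝ) - P) + l2 • P)
    (θhat : Fin d → ℝ)
    (hθhat : θhat = B⁻¹ *ᵥ (Dᵀ *ᵥ y + l1 • (((1 : Matrix (Fin d) (Fin d) ℝ) - P) *ᵥ θbar))) :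
    Real.sqrt ((θhat - θstar) ⬝ᵥ (B *ᵥ (θhat - θstar)))
      ≤ Real.sqrt ((Dᵀ *ᵥ ε) ⬝ᵥ (B⁻¹ *ᵥ (Dᵀ *ᵥ ε)))
        + l1 * Real.sqrt ((((1 : Matrix (Fin d) (Fin d) ℝ) - P) *ᵥ (θbar - θstar)) ⬝ᵥ
            (B⁻¹ *ᵥ (((1 : Matrix (Fin d) (Fin d) ℝ) - P) *ᵥ (θbar - θstar))))
        + l2 * Real.sqrt ((P *ᵥ θstar) ⬝ᵥ (B⁻¹ *ᵥ (P *ᵥ θstar))) := by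
  set Pp : Matrix (Fin d) (Fin d) ℝ := (1 : Matrix (Fin d) (Fin d) ℝ) - P with hPp
  have hPpT : Ppᵀ = Pp := by rw [hPp, transpose_sub, transpose_one, hsymm]
  have hPpidem : Pp * Pp = Pp := by
    rw [hPp]
    simp only [Matrix.sub_mul, Matrix.mul_sub, Matrix.one_mul, Matrix.mul_one, hidem]
    abel
  -- B is positive definite
  have hBpd : B.PosDef := by
    rw [posDef_iff_dotProduct_mulVec]
    constructor
    · show Bᴴ = B
      rw [hB]
      have h1 : (Dᵀ * D)ᴴ = Dᵀ * D := by
        rw [conjTranspose_eq_transpose_of_trivial]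
        rw [transpose_mul, transpose_transpose]
      have h2 : Pᴴ = P := by
        rw [conjTranspose_eq_transpose_of_trivial]; exact hsymm
      have h3 : Ppᴴ = Pp := by
        rw [conjTranspose_eq_transpose_of_trivial]; exact hPpT
      simp [conjTranspose_add, conjTranspose_smul, h1, h2, h3, hPpT, hsymm]
    · intro x hx
      have hPfac : (P *ᵥ x) ⬝ᵥ (P *ᵥ x) = x ⬝ᵥ P *ᵥ x := by
        rw [← sqdot_aux P x, hsymm, hidem]
      have hPpfac : (Pp *ᵥ x) ⬝ᵥ (Pp *ᵥ x) = x ⬝ᵥ Pp *ᵥ x := by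
        rw [← sqdot_aux Pp x, hPpT, hPpidem]
      have hexp : dotProduct (star x) (B *ᵥ x)
          = (D *ᵥ x) ⬝ᵥ (D *ᵥ x) + l1 * ((Pp *ᵥ x) ⬝ᵥ (Pp *ᵥ x))
            + l2 * ((P *ᵥ x) ⬝ᵥ (P *ᵥ x)) := by
        rw [star_trivial, hB, add_mulVec, add_mulVec, smul_mulVec, smul_mulVec,
          dotProduct_add, dotProduct_add, dotProduct_smul, dotProduct_smul,
          sqdot_aux D x, hPfac, hPpfac, smul_eq_mul, smul_eq_mul]
      rw [hexp]
      have hcases : P *ᵥ x ≠ 0 ∨ Pp *ᵥ x ≠ 0 := by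
        by_contra h
        push_neg at h
        apply hx
        have : P *ᵥ x + Pp *ᵥ x = x := by
          rw [hPp, sub_mulVec, one_mulVec]; abel
        rw [h.1, h.2, add_zero] at this
        exact this.symm
      rcases hcases with h | h
      · have ht : 0 < l2 * ((P *ᵥ x) ⬝ᵥ (P *ᵥ x)) := mul_pos hl2 (dot_self_pos_aux h)
        have h1 : 0 ≤ (D *ᵥ x) ⬝ᵥ (D *ᵥ x) := dot_self_nonneg_aux _
        have h2 : 0 ≤ l1 * ((Pp *ᵥ x) ⬝ᵥ (Pp *ᵥ x)) :=
          mul_nonneg hl1.le (dot_self_nonneg_aux _)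
        linarith
      · have ht : 0 < l1 * ((Pp *ᵥ x) ⬝ᵥ (Pp *ᵥ x)) := mul_pos hl1 (dot_self_pos_aux h)
        have h1 : 0 ≤ (D *ᵥ x) ⬝ᵥ (D *ᵥ x) := dot_self_nonneg_aux _
        have h3 : 0 ≤ l2 * ((P *ᵥ x) ⬝ᵥ (P *ᵥ x)) :=
          mul_nonneg hl2.le (dot_self_nonneg_aux _)
        linarith
  have hdet : IsUnit B.det := isUnit_iff_ne_zero.mpr hBpd.det_pos.ne'
  have hBinv : B⁻¹.PosSemidef := hBpd.inv.posSemidef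
  -- the residual vector
  set v1 : Fin d → ℝ := Dᵀ *ᵥ ε with hv1
  set v2 : Fin d → ℝ := l1 • (Pp *ᵥ (θbar - θstar)) with hv2
  set v3 : Fin d → ℝ := l2 • (P *ᵥ θstar) with hv3
  have hkey : θhat - θstar = B⁻¹ *ᵥ (v1 + v2 + -v3) := by
    have hts : θstar = B⁻¹ *ᵥ (B *ᵥ θstar) := by
      rw [mulVec_mulVec, nonsing_inv_mul _ hdet, one_mulVec]
    have hw : (Dᵀ *ᵥ y + l1 • (Pp *ᵥ θbar)) - B *ᵥ θstar = v1 + v2 + -v3 := by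
      rw [hy, hB, mulVec_add, add_mulVec, add_mulVec, smul_mulVec, smul_mulVec,
        ← mulVec_mulVec, hv1, hv2, hv3, mulVec_sub, smul_sub]
      abel
    rw [hθhat]
    conv_lhs => rw [hts]
    rw [← mulVec_sub, hw]
  have hLHS : (θhat - θstar) ⬝ᵥ (B *ᵥ (θhat - θstar))
      = (v1 + v2 + -v3) ⬝ᵥ (B⁻¹ *ᵥ (v1 + v2 + -v3)) := by
    rw [hkey, mulVec_mulVec, mul_nonsing_inv _ hdet, one_mulVec, dotProduct_comm]
  rw [hLHS]
  calc Real.sqrt ((v1 + v2 + -v3) ⬝ᵥ (B⁻¹ *ᵥ (v1 + v2 + -v3)))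
      ≤ Real.sqrt ((v1 + v2) ⬝ᵥ (B⁻¹ *ᵥ (v1 + v2)))
        + Real.sqrt ((-v3) ⬝ᵥ (B⁻¹ *ᵥ (-v3))) := psd_triangle hBinv _ _
    _ ≤ Real.sqrt (v1 ⬝ᵥ (B⁻¹ *ᵥ v1)) + Real.sqrt (v2 ⬝ᵥ (B⁻¹ *ᵥ v2))
        + Real.sqrt ((-v3) ⬝ᵥ (B⁻¹ *ᵥ (-v3))) := by
        have := psd_triangle hBinv v1 v2
        linarith
    _ = Real.sqrt (v1 ⬝ᵥ (B⁻¹ *ᵥ v1))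
        + l1 * Real.sqrt ((Pp *ᵥ (θbar - θstar)) ⬝ᵥ (B⁻¹ *ᵥ (Pp *ᵥ (θbar - θstar))))
        + l2 * Real.sqrt ((P *ᵥ θstar) ⬝ᵥ (B⁻¹ *ᵥ (P *ᵥ θstar))) := by
        rw [psd_neg, hv2, hv3, psd_smul, psd_smul, abs_of_pos hl1, abs_of_pos hl2]
end

section
/- Let P be a d×d real orthogonal projection matrix of rank p with 1 ≤ p ≤ d−1, P⊥ = I − P, q = d − p, and λ₁, λ₂ ≥ 1. Let x₁,…,x_n ∈ ℝ^d with ‖x_k‖ ≤ 1 for all k, and define B₀ = λ₁·P⊥ + λ₂·P and B_k = B_{k−1} + x_k x_kᵀ. Then ∑_{k=1}^n ‖x_k‖²_{B_{k−1}⁻¹} ≤ 2·( p·log(1 + n/(p·λ₂)) + q·log(1 + n/(q·λ₁)) ). -/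
open Matrix

lemma log_det_le_trace_sub_card {d : ℕ} {M : Matrix (Fin d) (Fin d) ℝ} (hM : M.PosDef) :
    Real.log M.det ≤ M.trace - d := by
  have hH : M.IsHermitian := hM.isHermitian
  have hev : ∀ i, 0 < hH.eigenvalues i := hM.eigenvalues_pos
  have hdet : M.det = ∏ i, hH.eigenvalues i := by
    simpa using hH.det_eq_prod_eigenvalues
  have htr : M.trace = ∑ i, hH.eigenvalues i := by
    conv_lhs => rw [hH.spectral_theorem, Unitary.conjStarAlgAut_apply]
    rw [Matrix.trace_mul_comm, ← Matrix.mul_assoc,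
      Unitary.coe_star_mul_self hH.eigenvectorUnitary, Matrix.one_mul,
      Matrix.trace_diagonal]
    simp [RCLike.ofReal_real_eq_id]
  rw [hdet, htr, Real.log_prod (fun i _ => (hev i).ne')]
  calc ∑ i, Real.log (hH.eigenvalues i) ≤ ∑ i, (hH.eigenvalues i - 1) :=
        Finset.sum_le_sum fun i _ => Real.log_le_sub_one_of_pos (hev i)
    _ = (∑ i, hH.eigenvalues i) - d := by
        rw [Finset.sum_sub_distrib]; simp

lemma proj_trace_det {d p : ℕ} (P : Matrix (Fin d) (Fin d) ℝ) (hsymm : Pᵀ = P)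
    (hidem : P * P = P) (hrank : P.rank = p) :
    P.trace = p ∧ ∀ a b : ℝ, (a • P + b • (1 - P)).det = a ^ p * b ^ (d - p) := by
  classical
  have hP : P.IsHermitian := by
    rwa [Matrix.IsHermitian, conjTranspose_eq_transpose_of_trivial]
  set U : Matrix (Fin d) (Fin d) ℝ := ↑(hP.eigenvectorUnitary) with hU
  set μ : Fin d → ℝ := hP.eigenvalues with hμ
  set D : Matrix (Fin d) (Fin d) ℝ := Matrix.diagonal μ with hD
  have hUU : star U * U = 1 := Unitary.coe_star_mul_self hP.eigenvectorUnitary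
  have hUU' : U * star U = 1 := Unitary.coe_mul_star_self hP.eigenvectorUnitary
  have hspec : P = U * D * star U := by
    have := hP.spectral_theorem
    simpa [RCLike.ofReal_real_eq_id, Unitary.conjStarAlgAut_apply] using this
  -- eigenvalues are 0 or 1
  have h3 : D * D = D := by
    have h2 : U * (D * D) * star U = U * D * star U := by
      conv_rhs => rw [← hspec, ← hidem, hspec]
      calc U * (D * D) * star U = (U * D) * ((star U * U) * (D * star U)) := by
            rw [hUU]; noncomm_ring
        _ = U * D * star U * (U * D * star U) := by noncomm_ring
    calc D * D = (star U * U) * (D * D) * (star U * U) := by rw [hUU]; noncomm_ring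
      _ = star U * (U * (D * D) * star U) * U := by noncomm_ring
      _ = star U * (U * D * star U) * U := by rw [h2]
      _ = (star U * U) * D * (star U * U) := by noncomm_ring
      _ = D := by rw [hUU]; noncomm_ring
  have hsq : ∀ i, μ i * μ i = μ i := by
    intro i
    have h4 : Matrix.diagonal (μ * μ) = Matrix.diagonal μ := by
      rwa [hD, Matrix.diagonal_mul_diagonal] at h3
    have := congrFun (congrFun h4 i) i
    simpa using this
  have h01 : ∀ i, μ i = 0 ∨ μ i = 1 := by
    intro i
    rcases mul_eq_zero.mp (show μ i * (μ i - 1) = 0 by linear_combination hsq i) with h | h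
    · exact Or.inl h
    · exact Or.inr (by linarith)
  -- cardinality of eigenvalue-one set
  have hcard : (Finset.univ.filter fun i => μ i = 1).card = p := by
    have h1 : P.rank = Fintype.card {i // μ i ≠ 0} := hP.rank_eq_card_non_zero_eigs
    have h2 : {i | μ i ≠ 0} = {i | μ i = 1} := by
      ext i; rcases h01 i with h | h <;> simp [h]
    rw [h1] at hrank
    have h4 : Finset.filter (fun x => μ x ≠ 0) Finset.univ
        = Finset.filter (fun i => μ i = 1) Finset.univ := by
      apply Finset.filter_congr
      intro i _
      rcases h01 i with h | h <;> simp [h]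
    rw [← hrank, Fintype.card_subtype, h4]
  have hcard' : (Finset.univ.filter fun i => ¬ μ i = 1).card = d - p := by
    have := Finset.card_filter_add_card_filter_not (s := (Finset.univ : Finset (Fin d)))
      (p := fun i => μ i = 1)
    rw [Finset.card_univ, Fintype.card_fin] at this
    omega
  constructor
  · -- trace
    have htr : P.trace = D.trace := by
      conv_lhs => rw [hspec]
      rw [Matrix.trace_mul_comm, ← Matrix.mul_assoc, hUU, Matrix.one_mul]
    rw [htr, hD, Matrix.trace_diagonal]
    rw [← Finset.sum_filter_add_sum_filter_not Finset.univ (fun i => μ i = 1)]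
    rw [Finset.sum_congr rfl (fun i hi => (Finset.mem_filter.mp hi).2),
      Finset.sum_congr rfl (fun i hi => show μ i = 0 by
        rcases h01 i with h | h
        · exact h
        · exact absurd h (Finset.mem_filter.mp hi).2)]
    simp [hcard]
  · intro a b
    set ν : Fin d → ℝ := fun i => a * μ i + b * (1 - μ i) with hν
    have hrepr : a • P + b • (1 - P) = U * Matrix.diagonal ν * star U := by
      have hdiag : Matrix.diagonal ν = a • D + b • (1 - D) := by
        ext i j
        by_cases h : i = j
        · subst h; simp [hν, hD, Matrix.diagonal_apply_eq, Matrix.one_apply_eq]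
        · simp [hν, hD, Matrix.diagonal_apply_ne _ h, Matrix.one_apply_ne h]
      rw [hdiag]
      have hone : (1 : Matrix (Fin d) (Fin d) ℝ) = U * 1 * star U := by
        rw [Matrix.mul_one, hUU']
      conv_lhs => rw [hspec, hone]
      simp only [Matrix.mul_add, Matrix.add_mul, Matrix.mul_sub, Matrix.sub_mul,
        Matrix.mul_smul, Matrix.smul_mul]
    rw [hrepr, Matrix.det_mul, Matrix.det_mul]
    have hdet1 : U.det * (star U).det = 1 := by
      rw [← Matrix.det_mul, hUU', Matrix.det_one]
    have hre : U.det * (Matrix.diagonal ν).det * (star U).det = (Matrix.diagonal ν).det := by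
      calc U.det * (Matrix.diagonal ν).det * (star U).det
          = (U.det * (star U).det) * (Matrix.diagonal ν).det := by ring
        _ = (Matrix.diagonal ν).det := by rw [hdet1, one_mul]
    rw [hre, Matrix.det_diagonal]
    rw [← Finset.prod_filter_mul_prod_filter_not Finset.univ (fun i => μ i = 1)]
    rw [Finset.prod_congr rfl (fun i hi => show ν i = a by
        have := (Finset.mem_filter.mp hi).2; simp [hν, this]),
      Finset.prod_congr rfl (fun i hi => show ν i = b by
        have h0 : μ i = 0 := by
          rcases h01 i with h | h
          · exact h
          · exact absurd h (Finset.mem_filter.mp hi).2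
        simp [hν, h0])]
    rw [Finset.prod_const, Finset.prod_const, hcard, hcard']

lemma dot_self_nonneg {d : ℕ} (v : Fin d → ℝ) : 0 ≤ v ⬝ᵥ v :=
  Finset.sum_nonneg fun i _ => mul_self_nonneg _

lemma dot_self_pos {d : ℕ} {v : Fin d → ℝ} (hv : v ≠ 0) : 0 < v ⬝ᵥ v := by
  obtain ⟨i, hi⟩ := Function.ne_iff.mp hv
  exact Finset.sum_pos' (fun j _ => mul_self_nonneg _)
    ⟨i, Finset.mem_univ i, mul_self_pos.mpr hi⟩

lemma dot_sq_le {d : ℕ} (u v : Fin d → ℝ) : (u ⬝ᵥ v)^2 ≤ (u ⬝ᵥ u) * (v ⬝ᵥ v) := by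
  simpa [dotProduct, sq] using
    Finset.sum_mul_sq_le_sq_mul_sq Finset.univ u v

lemma vmv_mulVec {d : ℕ} (w v u : Fin d → ℝ) :
    vecMulVec w v *ᵥ u = (v ⬝ᵥ u) • w := by
  ext i
  simp only [Matrix.mulVec, dotProduct, vecMulVec_apply, Pi.smul_apply, smul_eq_mul]
  rw [Finset.sum_mul]
  exact Finset.sum_congr rfl fun j _ => by ring

lemma mul_vmv {d : ℕ} (A : Matrix (Fin d) (Fin d) ℝ) (w v : Fin d → ℝ) :
    A * vecMulVec w v = vecMulVec (A *ᵥ w) v := by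
  ext i j
  simp only [Matrix.mul_apply, vecMulVec_apply, Matrix.mulVec, dotProduct]
  rw [Finset.sum_mul]
  exact Finset.sum_congr rfl fun k _ => by ring

lemma vmv_mul {d : ℕ} (w v : Fin d → ℝ) (A : Matrix (Fin d) (Fin d) ℝ) :
    vecMulVec w v * A = vecMulVec w (Aᵀ *ᵥ v) := by
  ext i j
  simp only [Matrix.mul_apply, vecMulVec_apply, Matrix.mulVec, dotProduct,
    Matrix.transpose_apply]
  rw [Finset.mul_sum]
  exact Finset.sum_congr rfl fun k _ => by ring

lemma trace_vmv {d : ℕ} (w v : Fin d → ℝ) : (vecMulVec w v).trace = w ⬝ᵥ v := by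
  simp [Matrix.trace, Matrix.diag, vecMulVec_apply, dotProduct]

lemma det_one_add_vmv {d : ℕ} (u v : Fin d → ℝ) :
    (1 + vecMulVec u v).det = 1 + v ⬝ᵥ u := by
  rw [vecMulVec_eq Unit, det_one_add_replicateCol_mul_replicateRow]

lemma vmv_posSemidef {d : ℕ} (u : Fin d → ℝ) : (vecMulVec u u).PosSemidef := by
  refine PosSemidef.of_dotProduct_mulVec_nonneg ?_ ?_
  · ext i j
    simp [Matrix.conjTranspose_apply, vecMulVec_apply, mul_comm]
  · intro v
    rw [star_trivial, vmv_mulVec, dotProduct_smul, smul_eq_mul, dotProduct_comm]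
    exact mul_self_nonneg _

lemma half_le_log {t : ℝ} (h0 : 0 ≤ t) (h1 : t ≤ 1) : t ≤ 2 * Real.log (1 + t) := by
  have hpos : (0:ℝ) < 1 + t := by linarith
  have h := Real.log_le_sub_one_of_pos (show (0:ℝ) < (1+t)⁻¹ by positivity)
  rw [Real.log_inv] at h
  have hinv : (1+t)⁻¹ - 1 = -(t/(1+t)) := by field_simp; ring
  have hlog : t / (1+t) ≤ Real.log (1+t) := by
    rw [hinv] at h; linarith
  have h2 : t/2 ≤ t/(1+t) := by
    rw [div_le_div_iff₀ (by norm_num) hpos]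
    nlinarith
  linarith

set_option maxHeartbeats 1000000 in
/-- Elliptical potential bound: ∑_{k=1}^n ‖x_k‖²_{B_{k−1}⁻¹} ≤ 2·S_n^{λ₁,λ₂}. -/
theorem elliptical_potential_bound (d p n : ℕ) (hp1 : 1 ≤ p) (hpd : p ≤ d - 1)
    (P : Matrix (Fin d) (Fin d) ℝ) (hsymm : Pᵀ = P) (hidem : P * P = P)
    (hrank : P.rank = p)
    (l1 l2 : ℝ) (hl1 : 1 ≤ l1) (hl2 : 1 ≤ l2)
    (x : ℕ → Fin d → ℝ) (hx : ∀ k, Real.sqrt (x k ⬝ᵥ x k) ≤ 1)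
    (B : ℕ → Matrix (Fin d) (Fin d) ℝ)
    (hB0 : B 0 = l1 • ((1 : Matrix (Fin d) (Fin d) ℝ) - P) + l2 • P)
    (hBs : ∀ k : ℕ, B (k + 1) = B k + vecMulVec (x (k + 1)) (x (k + 1))) :
    ∑ k ∈ Finset.range n, (x (k + 1) ⬝ᵥ ((B k)⁻¹ *ᵥ x (k + 1)))
      ≤ 2 * ((p : ℝ) * Real.log (1 + (n : ℝ) / ((p : ℝ) * l2))
        + ((d - p : ℕ) : ℝ) * Real.log (1 + (n : ℝ) / (((d - p : ℕ) : ℝ) * l1))) := by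
  classical
  have hd0 : 1 ≤ d := by omega
  have hpltd : p < d := by omega
  have hq1 : 1 ≤ d - p := by omega
  set Q : Matrix (Fin d) (Fin d) ℝ := 1 - P with hQdef
  have hPQ : P * Q = 0 := by
    rw [hQdef, Matrix.mul_sub, Matrix.mul_one, hidem, sub_self]
  have hQP : Q * P = 0 := by
    rw [hQdef, Matrix.sub_mul, Matrix.one_mul, hidem, sub_self]
  have hQidem : Q * Q = Q := by
    rw [hQdef, Matrix.mul_sub, Matrix.mul_one, Matrix.sub_mul, Matrix.one_mul, hidem]
    abel
  have hQsymm : Qᵀ = Q := by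
    rw [hQdef, Matrix.transpose_sub, Matrix.transpose_one, hsymm]
  have hPQ1 : P + Q = 1 := by rw [hQdef]; abel
  -- quadratic forms
  have hPself : ∀ v : Fin d → ℝ, v ⬝ᵥ (P *ᵥ v) = (P *ᵥ v) ⬝ᵥ (P *ᵥ v) := by
    intro v
    conv_lhs => rw [← hidem, ← Matrix.mulVec_mulVec]
    rw [dotProduct_mulVec, ← Matrix.mulVec_transpose, hsymm]
  have hQself : ∀ v : Fin d → ℝ, v ⬝ᵥ (Q *ᵥ v) = (Q *ᵥ v) ⬝ᵥ (Q *ᵥ v) := by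
    intro v
    conv_lhs => rw [← hQidem, ← Matrix.mulVec_mulVec]
    rw [dotProduct_mulVec, ← Matrix.mulVec_transpose, hQsymm]
  have hPnn : ∀ v : Fin d → ℝ, 0 ≤ v ⬝ᵥ (P *ᵥ v) := fun v => by
    rw [hPself]; exact dot_self_nonneg _
  have hQnn : ∀ v : Fin d → ℝ, 0 ≤ v ⬝ᵥ (Q *ᵥ v) := fun v => by
    rw [hQself]; exact dot_self_nonneg _
  have hPythag : ∀ v : Fin d → ℝ, v ⬝ᵥ (P *ᵥ v) + v ⬝ᵥ (Q *ᵥ v) = v ⬝ᵥ v := by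
    intro v
    rw [← dotProduct_add, ← Matrix.add_mulVec, hPQ1, Matrix.one_mulVec]
  -- combination algebra
  have hmulf : ∀ a₁ b₁ a₂ b₂ : ℝ, (a₁ • P + b₁ • Q) * (a₂ • P + b₂ • Q)
      = (a₁ * a₂) • P + (b₁ * b₂) • Q := by
    intro a₁ b₁ a₂ b₂
    rw [Matrix.add_mul, Matrix.mul_add, Matrix.mul_add]
    simp only [Matrix.smul_mul, Matrix.mul_smul, hidem, hPQ, hQP, hQidem, smul_smul,
      smul_zero]
    module
  have hfsymm : ∀ a b : ℝ, (a • P + b • Q)ᵀ = a • P + b • Q := by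
    intro a b
    rw [Matrix.transpose_add, Matrix.transpose_smul, Matrix.transpose_smul, hsymm, hQsymm]
  have hfherm : ∀ a b : ℝ, (a • P + b • Q).IsHermitian := by
    intro a b
    rw [Matrix.IsHermitian, conjTranspose_eq_transpose_of_trivial]
    exact hfsymm a b
  have hfquad : ∀ (a b : ℝ) (v : Fin d → ℝ), v ⬝ᵥ ((a • P + b • Q) *ᵥ v)
      = a * (v ⬝ᵥ (P *ᵥ v)) + b * (v ⬝ᵥ (Q *ᵥ v)) := by
    intro a b v
    rw [Matrix.add_mulVec, dotProduct_add, Matrix.smul_mulVec,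
      Matrix.smul_mulVec, dotProduct_smul, dotProduct_smul,
      smul_eq_mul, smul_eq_mul]
  -- B matrices: B k - 1 is PSD, B k is PD
  have hBgeq1 : ∀ k, ((B k - 1).PosSemidef) := by
    intro k
    induction k with
    | zero =>
      have hb0' : B 0 - 1 = (l2 - 1) • P + (l1 - 1) • Q := by
        rw [hB0, ← hPQ1]
        module
      rw [hb0']
      refine PosSemidef.of_dotProduct_mulVec_nonneg (hfherm _ _) fun v => ?_
      rw [star_trivial, hfquad]
      have h1 := mul_nonneg (show (0:ℝ) ≤ l2 - 1 by linarith) (hPnn v)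
      have h2 := mul_nonneg (show (0:ℝ) ≤ l1 - 1 by linarith) (hQnn v)
      linarith
    | succ k ih =>
      have h : B (k+1) - 1 = (B k - 1) + vecMulVec (x (k+1)) (x (k+1)) := by
        rw [hBs k]; abel
      rw [h]
      exact ih.add (vmv_posSemidef _)
  have hBpd : ∀ k, (B k).PosDef := by
    intro k
    have hps := hBgeq1 k
    have hBk : B k = (B k - 1) + 1 := by abel
    refine PosDef.of_dotProduct_mulVec_pos ?_ fun v hv => ?_
    · rw [hBk]; exact hps.isHermitian.add Matrix.isHermitian_one
    · rw [star_trivial]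
      have h2 := hps.dotProduct_mulVec_nonneg v
      rw [star_trivial, Matrix.sub_mulVec, dotProduct_sub, Matrix.one_mulVec] at h2
      have h3 := dot_self_pos hv
      linarith
  have hBherm : ∀ k, (B k).IsHermitian := fun k => (hBpd k).isHermitian
  have hdetpos : ∀ k, 0 < (B k).det := fun k => (hBpd k).det_pos
  -- the potential terms
  set t : ℕ → ℝ := fun k => x (k+1) ⬝ᵥ ((B k)⁻¹ *ᵥ x (k+1)) with htdef
  have hxx : ∀ k, x k ⬝ᵥ x k ≤ 1 := by
    intro k
    have h := hx k
    have h0 : 0 ≤ x k ⬝ᵥ x k := dot_self_nonneg _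
    have h1 := Real.sq_sqrt h0
    have h2 := Real.sqrt_nonneg (x k ⬝ᵥ x k)
    have h3 : Real.sqrt (x k ⬝ᵥ x k) * Real.sqrt (x k ⬝ᵥ x k) ≤ 1 * 1 :=
      mul_le_mul h h h2 zero_le_one
    nlinarith [h1, h3]
  have ht0 : ∀ k, 0 ≤ t k := by
    intro k
    have h := ((hBpd k).inv).posSemidef.dotProduct_mulVec_nonneg (x (k+1))
    rwa [star_trivial] at h
  have hBy : ∀ k, B k *ᵥ ((B k)⁻¹ *ᵥ x (k+1)) = x (k+1) := by
    intro k
    rw [Matrix.mulVec_mulVec, Matrix.mul_nonsing_inv _ (isUnit_iff_ne_zero.mpr (hdetpos k).ne'),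
      Matrix.one_mulVec]
  have ht1 : ∀ k, t k ≤ 1 := by
    intro k
    set y := (B k)⁻¹ *ᵥ x (k+1) with hy
    have h2 := (hBgeq1 k).dotProduct_mulVec_nonneg y
    rw [star_trivial, Matrix.sub_mulVec, dotProduct_sub, Matrix.one_mulVec, hBy k] at h2
    have h3 : y ⬝ᵥ x (k+1) = t k := dotProduct_comm _ _
    have hCS := dot_sq_le (x (k+1)) y
    have hX := hxx (k+1)
    have hXnn := dot_self_nonneg (x (k+1))
    have hynn := dot_self_nonneg y
    have htk : t k = x (k+1) ⬝ᵥ y := rfl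
    have hyt : y ⬝ᵥ y ≤ t k := by linarith
    have hsq : t k ^ 2 ≤ t k := by
      calc t k ^ 2 = (x (k+1) ⬝ᵥ y) ^ 2 := by rw [htk]
        _ ≤ (x (k+1) ⬝ᵥ x (k+1)) * (y ⬝ᵥ y) := hCS
        _ ≤ 1 * t k := mul_le_mul hX hyt hynn zero_le_one
        _ = t k := one_mul _
    linarith [sq_nonneg (t k - 1), hsq]
  -- determinant recursion and telescoping
  have hdetrec : ∀ k, (B (k+1)).det = (B k).det * (1 + t k) := by
    intro k
    have hfact : B (k+1) = B k * (1 + vecMulVec ((B k)⁻¹ *ᵥ x (k+1)) (x (k+1))) := by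
      rw [Matrix.mul_add, Matrix.mul_one, mul_vmv, hBy k, ← hBs k]
    rw [hfact, Matrix.det_mul, det_one_add_vmv]
  set L : ℕ → ℝ := fun k => Real.log (B k).det with hLdef
  have hLrec : ∀ k, Real.log (1 + t k) = L (k+1) - L k := by
    intro k
    have h1 : (0:ℝ) < 1 + t k := by linarith [ht0 k]
    simp only [hLdef]
    rw [hdetrec k, Real.log_mul (hdetpos k).ne' h1.ne']
    ring
  have hsumstep : ∑ k ∈ Finset.range n, t k ≤ 2 * (L n - L 0) := by
    calc ∑ k ∈ Finset.range n, t k ≤ ∑ k ∈ Finset.range n, 2 * Real.log (1 + t k) :=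
          Finset.sum_le_sum fun k _ => half_le_log (ht0 k) (ht1 k)
      _ = 2 * ∑ k ∈ Finset.range n, (L (k+1) - L k) := by
          rw [Finset.mul_sum]
          exact Finset.sum_congr rfl fun k _ => by rw [hLrec k]
      _ = 2 * (L n - L 0) := by rw [Finset.sum_range_sub]
  -- spectral data of the projection
  obtain ⟨htrP, hdetf⟩ := proj_trace_det P hsymm hidem hrank
  have hdetf' : ∀ a b : ℝ, (a • P + b • Q).det = a ^ p * b ^ (d - p) := by
    intro a b; rw [hQdef]; exact hdetf a b
  set pR : ℝ := (p : ℝ) with hpR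
  set qR : ℝ := ((d - p : ℕ) : ℝ) with hqR
  have hpR1 : (1:ℝ) ≤ pR := by rw [hpR]; exact_mod_cast hp1
  have hqR1 : (1:ℝ) ≤ qR := by rw [hqR]; exact_mod_cast hq1
  have hpR0 : (0:ℝ) < pR := by linarith
  have hqR0 : (0:ℝ) < qR := by linarith
  have hl10 : (0:ℝ) < l1 := by linarith
  have hl20 : (0:ℝ) < l2 := by linarith
  have hpq : pR + qR = (d:ℝ) := by
    rw [hpR, hqR, ← Nat.cast_add]
    congr 1
    omega
  have htrQ : Q.trace = qR := by
    rw [hQdef, Matrix.trace_sub, Matrix.trace_one, htrP]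
    simp only [Fintype.card_fin]
    linarith [hpq]
  set a : ℝ := l2 + n / pR with hadef
  set b : ℝ := l1 + n / qR with hbdef
  have hnn : (0:ℝ) ≤ n := Nat.cast_nonneg n
  have ha0 : 0 < a := by
    have h : (0:ℝ) ≤ n / pR := by positivity
    rw [hadef]; linarith
  have hb0 : 0 < b := by
    have h : (0:ℝ) ≤ n / qR := by positivity
    rw [hbdef]; linarith
  -- projected energies
  set sP : ℝ := ∑ k ∈ Finset.range n, (x (k+1) ⬝ᵥ (P *ᵥ x (k+1))) with hsPdef
  set sQ : ℝ := ∑ k ∈ Finset.range n, (x (k+1) ⬝ᵥ (Q *ᵥ x (k+1))) with hsQdef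
  have hsP0 : 0 ≤ sP := Finset.sum_nonneg fun k _ => hPnn _
  have hsQ0 : 0 ≤ sQ := Finset.sum_nonneg fun k _ => hQnn _
  have hsPQ : sP + sQ ≤ (n:ℝ) := by
    rw [hsPdef, hsQdef, ← Finset.sum_add_distrib]
    calc ∑ k ∈ Finset.range n, (x (k+1) ⬝ᵥ (P *ᵥ x (k+1)) + x (k+1) ⬝ᵥ (Q *ᵥ x (k+1)))
        = ∑ k ∈ Finset.range n, (x (k+1) ⬝ᵥ x (k+1)) :=
          Finset.sum_congr rfl fun k _ => hPythag _
      _ ≤ ∑ _k ∈ Finset.range n, (1:ℝ) := Finset.sum_le_sum fun k _ => hxx _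
      _ = n := by simp
  -- decomposition of B n and traces
  have hBsumgen : ∀ m, B m = B 0 + ∑ k ∈ Finset.range m, vecMulVec (x (k+1)) (x (k+1)) := by
    intro m
    induction m with
    | zero => simp
    | succ m ih => rw [hBs m, ih, Finset.sum_range_succ]; abel
  have hBsum := hBsumgen n
  have htraceBP : (B n * P).trace = l2 * pR + sP := by
    rw [hBsum, Matrix.add_mul, Matrix.trace_add, Finset.sum_mul, Matrix.trace_sum]
    have h1 : (B 0 * P) = l2 • P := by
      rw [hB0, Matrix.add_mul, Matrix.smul_mul, Matrix.smul_mul, hQP, hidem, smul_zero, zero_add]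
    have h2 : ∀ k, (vecMulVec (x (k+1)) (x (k+1)) * P).trace = x (k+1) ⬝ᵥ (P *ᵥ x (k+1)) := by
      intro k
      rw [vmv_mul, hsymm, trace_vmv]
    rw [h1, Matrix.trace_smul, htrP, Finset.sum_congr rfl fun k _ => h2 k]
    rw [hsPdef, smul_eq_mul, hpR]
  have htraceBQ : (B n * Q).trace = l1 * qR + sQ := by
    rw [hBsum, Matrix.add_mul, Matrix.trace_add, Finset.sum_mul, Matrix.trace_sum]
    have h1 : (B 0 * Q) = l1 • Q := by
      rw [hB0, Matrix.add_mul, Matrix.smul_mul, Matrix.smul_mul, hPQ, hQidem, smul_zero, add_zero]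
    have h2 : ∀ k, (vecMulVec (x (k+1)) (x (k+1)) * Q).trace = x (k+1) ⬝ᵥ (Q *ᵥ x (k+1)) := by
      intro k
      rw [vmv_mul, hQsymm, trace_vmv]
    rw [h1, Matrix.trace_smul, htrQ, Finset.sum_congr rfl fun k _ => h2 k]
    rw [hsQdef, smul_eq_mul]
  -- the comparison matrix
  set sa : ℝ := Real.sqrt a with hsa
  set sb : ℝ := Real.sqrt b with hsb
  have hsa0 : 0 < sa := Real.sqrt_pos.mpr ha0
  have hsb0 : 0 < sb := Real.sqrt_pos.mpr hb0
  have hsa2 : sa * sa = a := Real.mul_self_sqrt ha0.le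
  have hsb2 : sb * sb = b := Real.mul_self_sqrt hb0.le
  set R : Matrix (Fin d) (Fin d) ℝ := sa⁻¹ • P + sb⁻¹ • Q with hR
  set R' : Matrix (Fin d) (Fin d) ℝ := sa • P + sb • Q with hR'
  have hR'R : R' * R = 1 := by
    rw [hR', hR, hmulf, mul_inv_cancel₀ hsa0.ne', mul_inv_cancel₀ hsb0.ne', one_smul, one_smul,
      hPQ1]
  have hRR : R * R = a⁻¹ • P + b⁻¹ • Q := by
    rw [hR, hmulf, ← mul_inv, ← mul_inv, hsa2, hsb2]
  have hRsymm : Rᵀ = R := by rw [hR]; exact hfsymm _ _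
  have hBnt : (B n)ᵀ = B n := by
    have h := hBherm n
    rwa [Matrix.IsHermitian, conjTranspose_eq_transpose_of_trivial] at h
  set M : Matrix (Fin d) (Fin d) ℝ := R * B n * R with hM
  have hMpd : M.PosDef := by
    refine PosDef.of_dotProduct_mulVec_pos ?_ fun v hv => ?_
    · rw [hM, Matrix.IsHermitian, conjTranspose_eq_transpose_of_trivial,
        Matrix.transpose_mul, Matrix.transpose_mul, hRsymm, hBnt, Matrix.mul_assoc]
    · rw [star_trivial, hM, ← Matrix.mulVec_mulVec, ← Matrix.mulVec_mulVec,
        dotProduct_mulVec, ← Matrix.mulVec_transpose, hRsymm]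
      have hRv : R *ᵥ v ≠ 0 := by
        intro h
        apply hv
        have hinv : R' *ᵥ (R *ᵥ v) = v := by
          rw [Matrix.mulVec_mulVec, hR'R, Matrix.one_mulVec]
        rw [h, Matrix.mulVec_zero] at hinv
        exact hinv.symm
      have h := (hBpd n).dotProduct_mulVec_pos hRv
      rwa [star_trivial] at h
  have hdetR : R.det = (sa⁻¹)^p * (sb⁻¹)^(d-p) := by rw [hR]; exact hdetf' _ _
  have hdetRpos : 0 < R.det := by rw [hdetR]; positivity
  have hdetM : M.det = R.det * (B n).det * R.det := by
    rw [hM, Matrix.det_mul, Matrix.det_mul]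
  have hlogR : Real.log R.det = -(pR * Real.log a / 2) - qR * Real.log b / 2 := by
    rw [hdetR, Real.log_mul (by positivity) (by positivity), Real.log_pow, Real.log_pow,
      Real.log_inv, Real.log_inv, hsa, hsb, Real.log_sqrt ha0.le, Real.log_sqrt hb0.le,
      hpR, hqR]
    ring
  have hlogdetM : Real.log M.det = Real.log (B n).det
      - (pR * Real.log a + qR * Real.log b) := by
    rw [hdetM, Real.log_mul (mul_pos hdetRpos (hdetpos n)).ne' hdetRpos.ne',
      Real.log_mul hdetRpos.ne' (hdetpos n).ne', hlogR]
    ring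
  -- trace bound
  have htrM : M.trace ≤ (d:ℝ) := by
    have h1 : M.trace = (B n * (R * R)).trace := by
      rw [hM, Matrix.trace_mul_comm (R * B n) R, ← Matrix.mul_assoc, Matrix.trace_mul_comm]
    rw [h1, hRR, Matrix.mul_add, Matrix.trace_add, Matrix.mul_smul, Matrix.mul_smul,
      Matrix.trace_smul, Matrix.trace_smul, smul_eq_mul, smul_eq_mul, htraceBP, htraceBQ]
    have han : a * pR = l2 * pR + n := by
      rw [hadef, add_mul, div_mul_cancel₀ _ hpR0.ne']
    have hbn : b * qR = l1 * qR + n := by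
      rw [hbdef, add_mul, div_mul_cancel₀ _ hqR0.ne']
    have key1 : a⁻¹ * (l2 * pR + sP) ≤ pR := by
      calc a⁻¹ * (l2 * pR + sP) ≤ a⁻¹ * (a * pR) := by
            apply mul_le_mul_of_nonneg_left _ (inv_nonneg.mpr ha0.le)
            rw [han]; linarith
        _ = pR := by rw [← mul_assoc, inv_mul_cancel₀ ha0.ne', one_mul]
    have key2 : b⁻¹ * (l1 * qR + sQ) ≤ qR := by
      calc b⁻¹ * (l1 * qR + sQ) ≤ b⁻¹ * (b * qR) := by
            apply mul_le_mul_of_nonneg_left _ (inv_nonneg.mpr hb0.le)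
            rw [hbn]; linarith
        _ = qR := by rw [← mul_assoc, inv_mul_cancel₀ hb0.ne', one_mul]
    linarith
  have hlogBn : L n ≤ pR * Real.log a + qR * Real.log b := by
    have h := log_det_le_trace_sub_card hMpd
    rw [hlogdetM] at h
    have : Real.log (B n).det = L n := rfl
    linarith [htrM]
  have hL0 : L 0 = pR * Real.log l2 + qR * Real.log l1 := by
    have hb0eq : B 0 = l2 • P + l1 • Q := by rw [hB0]; abel
    simp only [hLdef]
    rw [hb0eq, hdetf' l2 l1, Real.log_mul (by positivity) (by positivity),
      Real.log_pow, Real.log_pow, hpR, hqR]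
  -- final assembly
  have h1 : Real.log a - Real.log l2 = Real.log (1 + n / (pR * l2)) := by
    rw [← Real.log_div ha0.ne' hl20.ne']
    congr 1
    rw [hadef]
    field_simp
  have h2 : Real.log b - Real.log l1 = Real.log (1 + n / (qR * l1)) := by
    rw [← Real.log_div hb0.ne' hl10.ne']
    congr 1
    rw [hbdef]
    field_simp
  have h1' : pR * Real.log (1 + n / (pR * l2)) = pR * Real.log a - pR * Real.log l2 := by
    rw [← h1]; ring
  have h2' : qR * Real.log (1 + n / (qR * l1)) = qR * Real.log b - qR * Real.log l1 := by
    rw [← h2]; ring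
  calc ∑ k ∈ Finset.range n, t k ≤ 2 * (L n - L 0) := hsumstep
    _ ≤ 2 * (pR * Real.log (1 + n / (pR * l2)) + qR * Real.log (1 + n / (qR * l1))) := by
        linarith [hlogBn, h1', h2', hL0.le, hL0.ge]
end
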